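/- arXiv:1906.07053 — 3 statements merged into one kernel-verified Lean document; each statement's English description precedes it below -/
import Mathlib

section
/- Let L be an algebraic lattice of sets in S and let M ∈ L be a maximal element of L \ {S}. Then M is an isolated point of L with respect to the constructible topology if and only if M is finitely generated. -/
open Set TopologicalSpace

/-- A topology `t` on `X` makes `X` a spectral space: quasi-compact, `T0`, sober, with a basis
of quasi-compact open sets closed under finite (binary) intersections. -/
def IsSpectral (X : Type*) (t : TopologicalSpace X) : Prop :=
  @CompactSpace X t ∧ @T0Space X t ∧ @QuasiSober X t ∧
    ∃ B : Set (Set X),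
      (∀ s ∈ B, @IsCompact X t s ∧ @IsOpen X t s) ∧
      (∀ s ∈ B, ∀ u ∈ B, s ∩ u ∈ B) ∧
      @TopologicalSpace.IsTopologicalBasis X t B

/-- The specialization order of a topology: `x ≤ y` iff `y ∈ closure {x}`. -/
def specLE {X : Type*} (t : TopologicalSpace X) (x y : X) : Prop := y ∈ @closure X t {x}

/-- `b` is the supremum of `S` with respect to the specialization order of `t`. -/
def IsSupSpec {X : Type*} (t : TopologicalSpace X) (S : Set X) (b : X) : Prop :=
  (∀ x ∈ S, specLE t x b) ∧ ∀ c, (∀ x ∈ S, specLE t x c) → specLE t b c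

/-- `b` is the infimum of `S` with respect to the specialization order of `t`. -/
def IsInfSpec {X : Type*} (t : TopologicalSpace X) (S : Set X) (b : X) : Prop :=
  (∀ x ∈ S, specLE t b x) ∧ ∀ c, (∀ x ∈ S, specLE t c x) → specLE t c b

/-- The constructible (patch) topology associated to a topology `t`: the coarsest topology in
which all quasi-compact `t`-open sets are clopen. -/
def patchOf {X : Type*} (t : TopologicalSpace X) : TopologicalSpace X :=
  TopologicalSpace.generateFrom
    {s : Set X | (@IsCompact X t s ∧ @IsOpen X t s) ∨ (@IsCompact X t sᶜ ∧ @IsOpen X t sᶜ)}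

/-- Closure with respect to the constructible (patch) topology of `t`. -/
def patchClosure {X : Type*} (t : TopologicalSpace X) (Y : Set X) : Set X :=
  @closure X (patchOf t) Y

def IsAlgebraicLattice {S : Type*} (L : Set (Set S)) : Prop :=
  (∀ D : Set (Set S), D ⊆ L → ⋂₀ D ∈ L) ∧
  (∀ D : Set (Set S), D ⊆ L → D.Nonempty → DirectedOn (· ⊆ ·) D → ⋃₀ D ∈ L)

def zarTopL {S : Type*} (L : Set (Set S)) : TopologicalSpace ↥L :=
  TopologicalSpace.generateFrom
    {U : Set ↥L | ∃ F : Set S, F.Finite ∧ U = {A : ↥L | F ⊆ (A : Set S)}}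

def FinGenL {S : Type*} (L : Set (Set S)) (A : Set S) : Prop :=
  ∃ F : Set S, F.Finite ∧ A = ⋂₀ {I ∈ L | F ⊆ I}

section Aux

variable {S : Type*} {L : Set (Set S)}

lemma zar_upclosed {O : Set ↥L}
    (hO : TopologicalSpace.GenerateOpen
      {U : Set ↥L | ∃ F : Set S, F.Finite ∧ U = {A : ↥L | F ⊆ (A : Set S)}} O) :
    ∀ A B : ↥L, (A : Set S) ⊆ (B : Set S) → A ∈ O → B ∈ O := by
  induction hO with
  | basic u hu =>
      obtain ⟨F, _, rfl⟩ := hu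
      exact fun A B hAB hA => hA.trans hAB
  | univ => exact fun A B _ _ => mem_univ B
  | inter u v _ _ ihu ihv => exact fun A B h hA => ⟨ihu A B h hA.1, ihv A B h hA.2⟩
  | sUnion K _ ih => rintro A B h ⟨s, hs, hA⟩; exact ⟨s, hs, ih s hs A B h hA⟩

lemma zar_basis {O : Set ↥L}
    (hO : TopologicalSpace.GenerateOpen
      {U : Set ↥L | ∃ F : Set S, F.Finite ∧ U = {A : ↥L | F ⊆ (A : Set S)}} O) :
    ∀ A ∈ O, ∃ F : Set S, F.Finite ∧ F ⊆ (A : Set S) ∧ {B : ↥L | F ⊆ (B : Set S)} ⊆ O := by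
  induction hO with
  | basic u hu =>
      obtain ⟨F, hF, rfl⟩ := hu
      exact fun A hA => ⟨F, hF, hA, fun B hB => hB⟩
  | univ => exact fun A _ => ⟨∅, finite_empty, empty_subset _, fun B _ => mem_univ B⟩
  | inter u v _ _ ihu ihv =>
      intro A hA
      obtain ⟨F1, hF1, hF1A, hF1u⟩ := ihu A hA.1
      obtain ⟨F2, hF2, hF2A, hF2v⟩ := ihv A hA.2
      exact ⟨F1 ∪ F2, hF1.union hF2, union_subset hF1A hF2A,
        fun B hB => ⟨hF1u (subset_union_left.trans hB), hF2v (subset_union_right.trans hB)⟩⟩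
  | sUnion K _ ih =>
      rintro A ⟨s, hs, hA⟩
      obtain ⟨F, hF, hFA, hFs⟩ := ih s hs A hA
      exact ⟨F, hF, hFA, hFs.trans (subset_sUnion_of_mem hs)⟩

lemma exists_finite_sInter {X : Type*} {g : Set (Set X)} {O : Set X}
    (hO : TopologicalSpace.GenerateOpen g O) :
    ∀ x ∈ O, ∃ t : Set (Set X), t.Finite ∧ t ⊆ g ∧ x ∈ ⋂₀ t ∧ ⋂₀ t ⊆ O := by
  induction hO with
  | basic u hu =>
      exact fun x hx => ⟨{u}, finite_singleton u, singleton_subset_iff.2 hu, by simpa, by simp⟩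
  | univ => exact fun x _ => ⟨∅, finite_empty, empty_subset _, by simp, by simp⟩
  | inter u v _ _ ihu ihv =>
      intro x hx
      obtain ⟨t1, ht1f, ht1g, hxt1, ht1u⟩ := ihu x hx.1
      obtain ⟨t2, ht2f, ht2g, hxt2, ht2v⟩ := ihv x hx.2
      refine ⟨t1 ∪ t2, ht1f.union ht2f, union_subset ht1g ht2g, ?_, ?_⟩
      · rw [sInter_union]; exact ⟨hxt1, hxt2⟩
      · rw [sInter_union]; exact fun y hy => ⟨ht1u hy.1, ht2v hy.2⟩
  | sUnion K _ ih =>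
      rintro x ⟨s, hs, hxs⟩
      obtain ⟨t, htf, htg, hxt, hts⟩ := ih s hs x hxs
      exact ⟨t, htf, htg, hxt, hts.trans (subset_sUnion_of_mem hs)⟩

lemma UF_compact (hL : IsAlgebraicLattice L) (F : Set S) :
    @IsCompact ↥L (zarTopL L) {A : ↥L | F ⊆ (A : Set S)} := by
  letI := zarTopL L
  have hNL : ⋂₀ {I ∈ L | F ⊆ I} ∈ L := hL.1 _ (sep_subset _ _)
  set m : ↥L := ⟨_, hNL⟩ with hm
  have hmF : F ⊆ (m : Set S) := subset_sInter fun I hI => hI.2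
  have hmin : ∀ A : ↥L, F ⊆ (A : Set S) → (m : Set S) ⊆ (A : Set S) :=
    fun A hA => sInter_subset_of_mem ⟨A.2, hA⟩
  refine isCompact_of_finite_subcover fun {ι} U hU hcov => ?_
  obtain ⟨i, hi⟩ := mem_iUnion.1 (hcov hmF)
  refine ⟨{i}, fun A hA => mem_iUnion₂.2 ⟨i, Finset.mem_singleton_self i, ?_⟩⟩
  exact zar_upclosed (hU i) m A (hmin A hA) hi

end Aux

theorem stmt10 {S : Type*} (L : Set (Set S)) (hL : IsAlgebraicLattice L)
    (M : Set S) (hM : M ∈ L) (hMne : M ≠ Set.univ)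
    (hmax : ∀ N ∈ L, M ⊆ N → N = M ∨ N = Set.univ) :
    @IsOpen ↥L (patchOf (zarTopL L)) {(⟨M, hM⟩ : ↥L)} ↔ FinGenL L M := by
  constructor
  · intro h
    have h' : TopologicalSpace.GenerateOpen
        {s : Set ↥L | (@IsCompact ↥L (zarTopL L) s ∧ @IsOpen ↥L (zarTopL L) s) ∨
          (@IsCompact ↥L (zarTopL L) sᶜ ∧ @IsOpen ↥L (zarTopL L) sᶜ)}
        {(⟨M, hM⟩ : ↥L)} := h
    obtain ⟨t, htf, htg, hxt, hts⟩ := exists_finite_sInter h' ⟨M, hM⟩ rfl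
    have hxt' : ∀ s ∈ t, (⟨M, hM⟩ : ↥L) ∈ s := fun s hs => hxt s hs
    have hO1open : TopologicalSpace.GenerateOpen
        {U : Set ↥L | ∃ F : Set S, F.Finite ∧ U = {A : ↥L | F ⊆ (A : Set S)}}
        (⋂₀ {s ∈ t | @IsOpen ↥L (zarTopL L) s}) := by
      letI := zarTopL L
      exact Set.Finite.isOpen_sInter (htf.subset (sep_subset _ _)) (fun s hs => hs.2)
    have hxO1 : (⟨M, hM⟩ : ↥L) ∈ ⋂₀ {s ∈ t | @IsOpen ↥L (zarTopL L) s} :=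
      fun s hs => hxt' s hs.1
    obtain ⟨F, hFfin, hFx, hUF⟩ := zar_basis hO1open ⟨M, hM⟩ hxO1
    refine ⟨F, hFfin, ?_⟩
    have hNL : ⋂₀ {I ∈ L | F ⊆ I} ∈ L := hL.1 _ (sep_subset _ _)
    set n : ↥L := ⟨_, hNL⟩ with hn
    have hFn : F ⊆ (n : Set S) := subset_sInter fun I hI => hI.2
    have hnM : (n : Set S) ⊆ M := sInter_subset_of_mem ⟨hM, hFx⟩
    have hnt : n ∈ ⋂₀ t := by
      intro s hs
      rcases htg hs with hcase | hcase
      · exact (sInter_subset_of_mem ⟨hs, hcase.2⟩ : ⋂₀ {s ∈ t | @IsOpen ↥L (zarTopL L) s} ⊆ s)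
          (hUF hFn)
      · by_contra hns
        exact (zar_upclosed hcase.2 n ⟨M, hM⟩ hnM hns) (hxt' s hs)
    have := hts hnt
    rw [mem_singleton_iff] at this
    exact (congrArg Subtype.val this).symm
  · rintro ⟨F, hFfin, hMF⟩
    obtain ⟨s0, hs0⟩ := (Set.ne_univ_iff_exists_notMem M).1 hMne
    have key : {(⟨M, hM⟩ : ↥L)} =
        {A : ↥L | F ⊆ (A : Set S)} ∩ {A : ↥L | ({s0} : Set S) ⊆ (A : Set S)}ᶜ := by
      ext A
      simp only [mem_singleton_iff, mem_inter_iff, mem_compl_iff, mem_setOf_eq,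
        singleton_subset_iff]
      constructor
      · rintro rfl
        exact ⟨show F ⊆ M by rw [hMF]; exact subset_sInter fun I hI => hI.2, hs0⟩
      · rintro ⟨hFA, hs0A⟩
        have hMA : M ⊆ (A : Set S) := by
          rw [hMF]; exact sInter_subset_of_mem ⟨A.2, show F ⊆ (A : Set S) from hFA⟩
        rcases hmax A A.2 hMA with h1 | h1
        · exact Subtype.ext h1
        · exact absurd (by rw [h1]; exact mem_univ s0) hs0A
    rw [key]
    have hopen1 : TopologicalSpace.GenerateOpen
        {s : Set ↥L | (@IsCompact ↥L (zarTopL L) s ∧ @IsOpen ↥L (zarTopL L) s) ∨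
          (@IsCompact ↥L (zarTopL L) sᶜ ∧ @IsOpen ↥L (zarTopL L) sᶜ)}
        {A : ↥L | F ⊆ (A : Set S)} :=
      .basic _ (Or.inl ⟨UF_compact hL F,
        TopologicalSpace.isOpen_generateFrom_of_mem ⟨F, hFfin, rfl⟩⟩)
    have hopen2 : TopologicalSpace.GenerateOpen
        {s : Set ↥L | (@IsCompact ↥L (zarTopL L) s ∧ @IsOpen ↥L (zarTopL L) s) ∨
          (@IsCompact ↥L (zarTopL L) sᶜ ∧ @IsOpen ↥L (zarTopL L) sᶜ)}
        {A : ↥L | ({s0} : Set S) ⊆ (A : Set S)}ᶜ :=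
      .basic _ (Or.inr (by
        rw [compl_compl]
        exact ⟨UF_compact hL {s0},
          TopologicalSpace.isOpen_generateFrom_of_mem ⟨{s0}, finite_singleton s0, rfl⟩⟩))
    exact TopologicalSpace.GenerateOpen.inter _ _ hopen1 hopen2
end

section
/- Let (R, m) be a Noetherian local ring. Then the set of m-primary ideals is dense, with respect to the constructible topology, in the space I•(R) of proper ideals of R (endowed with the Zariski topology). -/
open Set TopologicalSpace
open Topology

/-- The Zariski topology on the set of `R`-submodules of `M`, generated by the sets
`B(x₁,…,xₙ) = {N | x₁,…,xₙ ∈ N}`. -/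
def zarModTop (R M : Type*) [Semiring R] [AddCommMonoid M] [Module R M] :
    TopologicalSpace (Submodule R M) :=
  TopologicalSpace.generateFrom
    {U : Set (Submodule R M) | ∃ F : Set M, F.Finite ∧ U = {N : Submodule R M | F ⊆ (N : Set M)}}

/-- The Zariski topology on the set of ideals of `R`. -/
def zarIdealTop (R : Type*) [CommRing R] : TopologicalSpace (Ideal R) :=
  TopologicalSpace.generateFrom
    {U : Set (Ideal R) | ∃ F : Set R, F.Finite ∧ U = {I : Ideal R | F ⊆ (I : Set R)}}

section Aux

open IsLocalRing

variable {R : Type*} [CommRing R]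

lemma zar_up {U : Set (Ideal R)} (hU : IsOpen[zarIdealTop R] U) :
    ∀ ⦃I J : Ideal R⦄, I ∈ U → I ≤ J → J ∈ U := by
  have hU' : TopologicalSpace.GenerateOpen
      {U : Set (Ideal R) | ∃ F : Set R, F.Finite ∧ U = {I : Ideal R | F ⊆ (I : Set R)}} U := hU
  clear hU
  induction hU' with
  | basic u hu =>
      obtain ⟨F, -, rfl⟩ := hu
      intro I J hI hIJ
      exact hI.trans (SetLike.coe_subset_coe.mpr hIJ)
  | univ => intro I J _ _; trivial
  | inter u v _ _ ihu ihv => exact fun I J hI hIJ => ⟨ihu hI.1 hIJ, ihv hI.2 hIJ⟩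
  | sUnion S _ ih =>
      rintro I J ⟨u, hu, hIu⟩ hIJ
      exact ⟨u, hu, ih u hu hIu hIJ⟩

lemma zar_basis_s13 :
    IsTopologicalBasis (t := zarIdealTop R)
      {U : Set (Ideal R) | ∃ F : Set R, F.Finite ∧ U = {I : Ideal R | F ⊆ (I : Set R)}} := by
  letI := zarIdealTop R
  refine isTopologicalBasis_of_isOpen_of_nhds
    (fun u hu => TopologicalSpace.GenerateOpen.basic u hu) ?_
  intro a u hau hu
  have hu' : TopologicalSpace.GenerateOpen
      {U : Set (Ideal R) | ∃ F : Set R, F.Finite ∧ U = {I : Ideal R | F ⊆ (I : Set R)}} u := hu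
  clear hu
  induction hu' with
  | basic v hv => exact ⟨v, hv, hau, subset_rfl⟩
  | univ => exact ⟨univ, ⟨∅, finite_empty, by simp⟩, trivial, subset_rfl⟩
  | inter u v hu hv ihu ihv =>
      obtain ⟨b₁, ⟨F₁, hF₁, rfl⟩, hab₁, hb₁⟩ := ihu hau.1
      obtain ⟨b₂, ⟨F₂, hF₂, rfl⟩, hab₂, hb₂⟩ := ihv hau.2
      exact ⟨_, ⟨F₁ ∪ F₂, hF₁.union hF₂, rfl⟩, union_subset hab₁ hab₂,
        fun K hK => ⟨hb₁ fun x hx => hK (Or.inl hx), hb₂ fun x hx => hK (Or.inr hx)⟩⟩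
  | sUnion S hS ih =>
      obtain ⟨v, hvS, hav⟩ := hau
      obtain ⟨b, hb, hab, hbv⟩ := ih v hvS hav
      exact ⟨b, hb, hab, hbv.trans (subset_sUnion_of_mem hvS)⟩

lemma krull_step [IsNoetherianRing R] [IsLocalRing R] {I : Ideal R} (hI : I ≠ ⊤)
    {x : R} (hx : x ∉ I) : ∃ N : ℕ, ∀ n ≥ N, x ∉ maximalIdeal R ^ n ⊔ I := by
  haveI : Nontrivial (R ⧸ I) := Ideal.Quotient.nontrivial_iff.mpr hI
  haveI : IsLocalRing (R ⧸ I) :=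
    IsLocalRing.of_surjective' (Ideal.Quotient.mk I) Ideal.Quotient.mk_surjective
  set m' : Ideal (R ⧸ I) := (maximalIdeal R).map (Ideal.Quotient.mk I) with hm'
  have hm'top : m' ≠ ⊤ := by
    intro h
    have h2 := congrArg (Ideal.comap (Ideal.Quotient.mk I)) h
    rw [Ideal.comap_map_of_surjective _ Ideal.Quotient.mk_surjective, ← RingHom.ker_eq_comap_bot,
      Ideal.mk_ker,
      Ideal.comap_top, sup_eq_left.mpr (le_maximalIdeal hI)] at h2
    exact (maximalIdeal.isMaximal R).ne_top h2
  have hbot : (⨅ n : ℕ, m' ^ n) = ⊥ := Ideal.iInf_pow_eq_bot_of_isLocalRing (I := m') hm'top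
  have hx0 : Ideal.Quotient.mk I x ≠ 0 := by
    simpa [Ideal.Quotient.eq_zero_iff_mem] using hx
  have hex : ∃ n, Ideal.Quotient.mk I x ∉ m' ^ n := by
    by_contra h
    push_neg at h
    have hmem : Ideal.Quotient.mk I x ∈ (⨅ n : ℕ, m' ^ n) := Submodule.mem_iInf _ |>.mpr h
    rw [hbot] at hmem
    exact hx0 ((Submodule.mem_bot _).mp hmem)
  obtain ⟨n, hn⟩ := hex
  refine ⟨n, fun k hk hxk => hn ?_⟩
  have hmem : Ideal.Quotient.mk I x ∈ (maximalIdeal R ^ k ⊔ I).map (Ideal.Quotient.mk I) :=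
    Ideal.mem_map_of_mem _ hxk
  rw [Ideal.map_sup, Ideal.map_pow, Ideal.map_quotient_self, sup_bot_eq] at hmem
  exact Ideal.pow_le_pow_right hk hmem

end Aux


section Aux2

open IsLocalRing

variable {R : Type*} [CommRing R] [IsNoetherianRing R] [IsLocalRing R]

lemma subbasic_eventually
    {S : Set {I : Ideal R // I ≠ ⊤}}
    (hS : (@IsCompact _ (TopologicalSpace.induced Subtype.val (zarIdealTop R)) S ∧
            IsOpen[TopologicalSpace.induced Subtype.val (zarIdealTop R)] S) ∨
          (@IsCompact _ (TopologicalSpace.induced Subtype.val (zarIdealTop R)) Sᶜ ∧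
            IsOpen[TopologicalSpace.induced Subtype.val (zarIdealTop R)] Sᶜ))
    {I : {I : Ideal R // I ≠ ⊤}} (hI : I ∈ S) :
    ∃ N : ℕ, ∀ n ≥ N, ∀ J : {I : Ideal R // I ≠ ⊤},
      (J : Ideal R) = maximalIdeal R ^ n ⊔ (I : Ideal R) → J ∈ S := by
  classical
  rcases hS with ⟨-, hopen⟩ | ⟨hcomp, hopen⟩
  · obtain ⟨U, hU, rfl⟩ := (isOpen_induced_iff (t := zarIdealTop R)).mp hopen
    exact ⟨0, fun n _ J hJ => zar_up hU hI (hJ ▸ le_sup_right)⟩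
  · obtain ⟨U, hUopen, hUS⟩ := (isOpen_induced_iff (t := zarIdealTop R)).mp hopen
    have key : ∀ J : {I : Ideal R // I ≠ ⊤}, J ∈ Sᶜ →
        ∃ F : Set R, F.Finite ∧ F ⊆ ((J : Ideal R) : Set R) ∧
          Subtype.val ⁻¹' {K : Ideal R | F ⊆ (K : Set R)} ⊆ Sᶜ ∧
          ¬ F ⊆ ((I : Ideal R) : Set R) := by
      intro J hJ
      have hJU : (J : Ideal R) ∈ U := by rw [← hUS] at hJ; exact hJ
      obtain ⟨v, ⟨F, hF, rfl⟩, hJv, hvU⟩ :=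
        TopologicalSpace.IsTopologicalBasis.exists_subset_of_mem_open
          (t := zarIdealTop R) zar_basis_s13 hJU hUopen
      refine ⟨F, hF, hJv, fun K hK => ?_, fun h => ?_⟩
      · rw [← hUS]; exact hvU hK
      · exact (hUS ▸ (hvU h : (I : Ideal R) ∈ U) : I ∈ Sᶜ) hI
    choose F hFfin hFJ hFsub hFI using key
    have hcover : Sᶜ ⊆ ⋃ (J : ↥(Sᶜ)),
        Subtype.val ⁻¹' {K : Ideal R | F J.1 J.2 ⊆ (K : Set R)} := by
      intro J hJ
      exact Set.mem_iUnion.mpr ⟨⟨J, hJ⟩, hFJ J hJ⟩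
    obtain ⟨T, hT⟩ := @IsCompact.elim_finite_subcover _
      (TopologicalSpace.induced Subtype.val (zarIdealTop R)) _ _ hcomp
      (fun J : ↥(Sᶜ) => Subtype.val ⁻¹' {K : Ideal R | F J.1 J.2 ⊆ (K : Set R)})
      (fun J => isOpen_induced (t := zarIdealTop R) (f := Subtype.val)
        (TopologicalSpace.GenerateOpen.basic _ ⟨F J.1 J.2, hFfin J.1 J.2, rfl⟩)) hcover
    have hx : ∀ J : ↥(Sᶜ), ∃ x, x ∈ F J.1 J.2 ∧ x ∉ (I : Ideal R) :=
      fun J => Set.not_subset.mp (hFI J.1 J.2)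
    choose x hxF hxI using hx
    choose N hN using fun J : ↥(Sᶜ) => krull_step I.2 (hxI J)
    refine ⟨T.sup N, fun k hk J hJ => ?_⟩
    by_contra hJS
    have hmem := hT hJS
    simp only [Set.mem_iUnion] at hmem
    obtain ⟨i, hiT, hJi⟩ := hmem
    exact hN i k (le_trans (Finset.le_sup hiT) hk) (hJ ▸ hJi (hxF i))

end Aux2

theorem stmt13 (R : Type*) [CommRing R] [IsNoetherianRing R] [IsLocalRing R] :
    @Dense {I : Ideal R // I ≠ ⊤}
        (patchOf (TopologicalSpace.induced Subtype.val (zarIdealTop R)))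
        {I : {I : Ideal R // I ≠ ⊤} |
          (I : Ideal R).IsPrimary ∧
            (I : Ideal R).radical = IsLocalRing.maximalIdeal R} := by
  classical
  have hB := isTopologicalBasis_of_subbasis
    (t := patchOf (TopologicalSpace.induced
      (Subtype.val : {I : Ideal R // I ≠ ⊤} → Ideal R) (zarIdealTop R))) rfl
  refine (TopologicalSpace.IsTopologicalBasis.dense_iff
    (t := patchOf (TopologicalSpace.induced
      (Subtype.val : {I : Ideal R // I ≠ ⊤} → Ideal R) (zarIdealTop R))) hB).mpr ?_
  rintro o ⟨f, ⟨hf, hfsub⟩, rfl⟩ ⟨I, hIo⟩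
  have hev : ∀ S ∈ f, ∀ᶠ n in Filter.atTop, ∀ J : {I : Ideal R // I ≠ ⊤},
      (J : Ideal R) = IsLocalRing.maximalIdeal R ^ n ⊔ (I : Ideal R) → J ∈ S := by
    intro S hSf
    obtain ⟨N, hN⟩ := subbasic_eventually (hfsub hSf) (hIo S hSf)
    exact Filter.eventually_atTop.mpr ⟨N, hN⟩
  obtain ⟨n, hn, hn1⟩ :=
    (((Filter.eventually_all_finite hf).mpr hev).and (Filter.eventually_ge_atTop 1)).exists
  have hn0 : n ≠ 0 := Nat.one_le_iff_ne_zero.mp hn1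
  have hle : IsLocalRing.maximalIdeal R ^ n ⊔ (I : Ideal R) ≤ IsLocalRing.maximalIdeal R :=
    sup_le (Ideal.pow_le_self hn0) (IsLocalRing.le_maximalIdeal I.2)
  have hne : IsLocalRing.maximalIdeal R ^ n ⊔ (I : Ideal R) ≠ ⊤ := fun h =>
    (IsLocalRing.maximalIdeal.isMaximal R).ne_top (top_le_iff.mp (h ▸ hle))
  have hrad : (IsLocalRing.maximalIdeal R ^ n ⊔ (I : Ideal R)).radical =
      IsLocalRing.maximalIdeal R := by
    apply le_antisymm
    · calc (IsLocalRing.maximalIdeal R ^ n ⊔ (I : Ideal R)).radical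
          ≤ (IsLocalRing.maximalIdeal R).radical := Ideal.radical_mono hle
        _ = IsLocalRing.maximalIdeal R :=
          ((IsLocalRing.maximalIdeal.isMaximal R).isPrime).radical
    · calc IsLocalRing.maximalIdeal R
          = (IsLocalRing.maximalIdeal R ^ n).radical := by
            rw [Ideal.radical_pow _ hn0,
              ((IsLocalRing.maximalIdeal.isMaximal R).isPrime).radical]
        _ ≤ _ := Ideal.radical_mono le_sup_left
  refine ⟨⟨IsLocalRing.maximalIdeal R ^ n ⊔ (I : Ideal R), hne⟩,
    fun S hSf => hn S hSf _ rfl, ?_, hrad⟩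
  exact Ideal.isPrimary_of_isMaximal_radical
    (by rw [hrad]; exact IsLocalRing.maximalIdeal.isMaximal R)
end

section
/- Let V be a valuation domain and P a branched prime ideal of V, i.e., there exists a P-primary ideal distinct from P. Then the closure of the set P(P) of P-primary ideals of V in the constructible topology of the space of ideals of V equals P(P) together with the prime ideal Q of V immediately below P (the largest prime properly contained in P). -/
open Set TopologicalSpace

section Aux

open Ideal

variable {V : Type*} [CommRing V]

/-- The generating set of the Zariski topology on ideals. -/
def zGen (V : Type*) [CommRing V] : Set (Set (Ideal V)) :=
  {U : Set (Ideal V) | ∃ F : Set V, F.Finite ∧ U = {I : Ideal V | F ⊆ (I : Set V)}}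

lemma zarIdealTop_eq (V : Type*) [CommRing V] :
    zarIdealTop V = TopologicalSpace.generateFrom (zGen V) := rfl

lemma zar_upclosed_s15 {U : Set (Ideal V)} (hU : TopologicalSpace.GenerateOpen (zGen V) U) :
    ∀ {I J : Ideal V}, I ≤ J → I ∈ U → J ∈ U := by
  induction hU with
  | basic s hs =>
    obtain ⟨F, _, rfl⟩ := hs
    intro I J hIJ hI x hx
    exact hIJ (hI hx)
  | univ => intro I J _ _; trivial
  | inter s t _ _ ihs iht => intro I J h hI; exact ⟨ihs h hI.1, iht h hI.2⟩
  | sUnion S _ ih =>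
    intro I J h hI
    obtain ⟨s, hsS, hIs⟩ := hI
    exact ⟨s, hsS, ih s hsS h hIs⟩

lemma zar_exists_basic {U : Set (Ideal V)} (hU : TopologicalSpace.GenerateOpen (zGen V) U) :
    ∀ {I : Ideal V}, I ∈ U →
      ∃ F : Set V, F.Finite ∧ F ⊆ (I : Set V) ∧ {J : Ideal V | F ⊆ (J : Set V)} ⊆ U := by
  induction hU with
  | basic s hs =>
    obtain ⟨F, hF, rfl⟩ := hs
    exact fun hI => ⟨F, hF, hI, subset_rfl⟩
  | univ => exact fun _ => ⟨∅, Set.finite_empty, Set.empty_subset _, Set.subset_univ _⟩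
  | inter s t _ _ ihs iht =>
    intro I hI
    obtain ⟨F1, h1, h1I, h1s⟩ := ihs hI.1
    obtain ⟨F2, h2, h2I, h2s⟩ := iht hI.2
    exact ⟨F1 ∪ F2, h1.union h2, Set.union_subset h1I h2I,
      fun J hJ => ⟨h1s fun x hx => hJ (Or.inl hx), h2s fun x hx => hJ (Or.inr hx)⟩⟩
  | sUnion S _ ih =>
    intro I hI
    obtain ⟨s, hsS, hIs⟩ := hI
    obtain ⟨F, h, hI', hs'⟩ := ih s hsS hIs
    exact ⟨F, h, hI', fun J hJ => ⟨s, hsS, hs' hJ⟩⟩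

lemma BB_compact (F : Set V) :
    @IsCompact (Ideal V) (zarIdealTop V) {J : Ideal V | F ⊆ (J : Set V)} := by
  letI := zarIdealTop V
  refine isCompact_of_finite_subcover fun {ι} U hUo hcov => ?_
  have hspan : Ideal.span F ∈ {J : Ideal V | F ⊆ (J : Set V)} := Ideal.subset_span
  obtain ⟨i, hi⟩ := Set.mem_iUnion.mp (hcov hspan)
  refine ⟨{i}, fun J hJ => Set.mem_biUnion (Finset.mem_singleton_self i) ?_⟩
  exact zar_upclosed_s15 (hUo i) (Ideal.span_le.mpr hJ) hi

lemma BB_open (F : Set V) (hF : F.Finite) :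
    @IsOpen (Ideal V) (zarIdealTop V) {J : Ideal V | F ⊆ (J : Set V)} :=
  TopologicalSpace.GenerateOpen.basic _ ⟨F, hF, rfl⟩

/-- The generating set of the patch topology. -/
def pGen (V : Type*) [CommRing V] : Set (Set (Ideal V)) :=
  {s : Set (Ideal V) | (@IsCompact (Ideal V) (zarIdealTop V) s ∧ @IsOpen (Ideal V) (zarIdealTop V) s)
    ∨ (@IsCompact (Ideal V) (zarIdealTop V) sᶜ ∧ @IsOpen (Ideal V) (zarIdealTop V) sᶜ)}

lemma patchOf_eq (V : Type*) [CommRing V] :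
    patchOf (zarIdealTop V) = TopologicalSpace.generateFrom (pGen V) := rfl

lemma compact_open_structure {W : Set (Ideal V)}
    (hWc : @IsCompact (Ideal V) (zarIdealTop V) W)
    (hWo : TopologicalSpace.GenerateOpen (zGen V) W) {Q : Ideal V} (hQ : Q ∉ W) :
    ∃ G : Finset V, (∀ g ∈ G, g ∉ Q) ∧ ∀ J : Ideal V, (∀ g ∈ G, g ∉ J) → J ∉ W := by
  classical
  letI := zarIdealTop V
  have h1 : ∀ i : W, ∃ F : Set V, F.Finite ∧ F ⊆ (i.1 : Set V) ∧
      {J : Ideal V | F ⊆ (J : Set V)} ⊆ W := fun i => zar_exists_basic hWo i.2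
  choose F hFfin hFsub hFW using h1
  have h2 : ∀ i : W, ∃ g, g ∈ F i ∧ g ∉ Q := by
    intro i
    by_contra h
    push_neg at h
    exact hQ (hFW i fun x hx => h x hx)
  choose g hgF hgQ using h2
  have hcov : W ⊆ ⋃ i : W, {J : Ideal V | F i ⊆ (J : Set V)} := fun I hI =>
    Set.mem_iUnion.mpr ⟨⟨I, hI⟩, hFsub ⟨I, hI⟩⟩
  obtain ⟨t, ht⟩ := hWc.elim_finite_subcover (fun i : W => {J : Ideal V | F i ⊆ (J : Set V)})
    (fun i => BB_open (F i) (hFfin i)) hcov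
  refine ⟨t.image g, ?_, ?_⟩
  · intro x hx
    obtain ⟨i, _, rfl⟩ := Finset.mem_image.mp hx
    exact hgQ i
  · intro J hJ hJW
    obtain ⟨i, hit, hiJ⟩ := Set.mem_iUnion₂.mp (ht hJW)
    exact hJ (g i) (Finset.mem_image_of_mem g hit) (hiJ (hgF i))

/-- Saturation of an ideal at a prime `P`. -/
def sat (P : Ideal V) (hP : P.IsPrime) (I : Ideal V) : Ideal V where
  carrier := {x | ∃ s, s ∉ P ∧ s * x ∈ I}
  add_mem' := by
    rintro a b ⟨s, hs, hsa⟩ ⟨t, ht, htb⟩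
    refine ⟨s * t, fun h => ((hP.mem_or_mem h).elim hs ht), ?_⟩
    have h : s * t * (a + b) = t * (s * a) + s * (t * b) := by ring
    rw [h]
    exact I.add_mem (I.mul_mem_left _ hsa) (I.mul_mem_left _ htb)
  zero_mem' := ⟨1, (Ideal.ne_top_iff_one P).mp hP.ne_top, by simpa using I.zero_mem⟩
  smul_mem' := by
    rintro c x ⟨s, hs, hsx⟩
    refine ⟨s, hs, ?_⟩
    have h : s * (c • x) = c * (s * x) := by rw [smul_eq_mul]; ring
    rw [h]
    exact I.mul_mem_left c hsx

lemma mem_sat {P : Ideal V} {hP : P.IsPrime} {I : Ideal V} {x : V} :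
    x ∈ sat P hP I ↔ ∃ s, s ∉ P ∧ s * x ∈ I := Iff.rfl

lemma le_sat {P : Ideal V} (hP : P.IsPrime) (I : Ideal V) : I ≤ sat P hP I :=
  fun x hx => ⟨1, (Ideal.ne_top_iff_one P).mp hP.ne_top, by simpa using hx⟩

lemma sat_mono {P : Ideal V} (hP : P.IsPrime) {I J : Ideal V} (h : I ≤ J) :
    sat P hP I ≤ sat P hP J := by
  rintro x ⟨s, hs, hsx⟩
  exact ⟨s, hs, h hsx⟩

lemma sat_sat {P : Ideal V} (hP : P.IsPrime) (I : Ideal V) :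
    sat P hP (sat P hP I) ≤ sat P hP I := by
  rintro x ⟨s, hs, t, ht, hx⟩
  refine ⟨t * s, fun h => ((hP.mem_or_mem h).elim ht hs), ?_⟩
  rwa [mul_assoc]

lemma primary_of_sat {P : Ideal V} (hP : P.IsPrime) {I : Ideal V}
    (hrad : I.radical = P) (hsat : sat P hP I ≤ I) : I.IsPrimary := by
  rw [Ideal.isPrimary_iff]
  refine ⟨fun hI => hP.ne_top (by rw [← hrad, Ideal.radical_eq_top]; exact hI), ?_⟩
  intro x y hxy
  by_cases hy : y ∈ P
  · right; rw [hrad]; exact hy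
  · left; exact hsat ⟨y, hy, by rwa [mul_comm]⟩

lemma sat_le_of_primary {P : Ideal V} (hP : P.IsPrime) {I : Ideal V}
    (hpr : I.IsPrimary) (hrad : I.radical = P) : sat P hP I ≤ I := by
  rintro x ⟨s, hs, hsx⟩
  rcases (Ideal.isPrimary_iff.mp hpr).2 (show x * s ∈ I by rwa [mul_comm]) with h | h
  · exact h
  · exact absurd (hrad ▸ h) hs

variable [IsDomain V] [ValuationRing V]

lemma ideal_le_total (I J : Ideal V) : I ≤ J ∨ J ≤ I :=
  (inferInstance : IsTotal (Ideal V) (· ≤ ·)).total I J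

lemma radical_isPrime {I : Ideal V} (hI : I ≠ ⊤) : I.radical.IsPrime := by
  constructor
  · rwa [Ne, Ideal.radical_eq_top]
  · intro x y hxy
    obtain ⟨n, hn⟩ := hxy
    obtain ⟨c, hc | hc⟩ := PreValuationRing.cond x y
    · right
      refine ⟨2 * n, ?_⟩
      have h : y ^ (2 * n) = (x * y) ^ n * c ^ n := by rw [← hc]; ring
      rw [h]
      exact I.mul_mem_right _ hn
    · left
      refine ⟨2 * n, ?_⟩
      have h : x ^ (2 * n) = (x * y) ^ n * c ^ n := by rw [← hc]; ring
      rw [h]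
      exact I.mul_mem_right _ hn

lemma Q_le_primary {P Q : Ideal V} (hQ : Q.IsPrime) (hQP : Q < P) {J : Ideal V}
    (hrad : J.radical = P) : Q ≤ J := by
  rcases ideal_le_total J Q with h | h
  · exfalso
    have : P ≤ Q := by
      rw [← hrad, ← hQ.radical]
      exact Ideal.radical_mono h
    exact hQP.not_ge this
  · exact h

lemma span_rad_eq {P Q : Ideal V} (hP : P.IsPrime) (hQ : Q.IsPrime) (hQP : Q < P)
    (himm : ∀ P' : Ideal V, P'.IsPrime → Q < P' → P ≤ P')
    {x : V} (hxP : x ∈ P) (hxQ : x ∉ Q) : (Ideal.span {x}).radical = P := by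
  have hne : Ideal.span {x} ≠ ⊤ := by
    rw [Ne, Ideal.span_singleton_eq_top]
    intro hu
    exact hP.ne_top (Ideal.eq_top_of_isUnit_mem P hxP hu)
  have hp := radical_isPrime hne
  have hx' : x ∈ (Ideal.span {x}).radical :=
    Ideal.le_radical (Ideal.mem_span_singleton_self x)
  have hQlt : Q < (Ideal.span {x}).radical := by
    rcases ideal_le_total (Ideal.span {x}).radical Q with h | h
    · exact absurd (h hx') hxQ
    · exact lt_of_le_of_ne h fun he => hxQ (he ▸ hx')
  refine le_antisymm ?_ (himm _ hp hQlt)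
  rw [← hP.radical]
  exact Ideal.radical_mono (Ideal.span_le.mpr (Set.singleton_subset_iff.mpr hxP))

lemma exists_primary {P Q : Ideal V} (hP : P.IsPrime) (hQ : Q.IsPrime) (hQP : Q < P)
    (himm : ∀ P' : Ideal V, P'.IsPrime → Q < P' → P ≤ P')
    (G : Finset V) (hG : ∀ g ∈ G, g ∉ Q) :
    ∃ J : Ideal V, (J.IsPrimary ∧ J.radical = P) ∧ Q ≤ J ∧ ∀ g ∈ G, g ∉ J := by
  classical
  by_cases hGP : ∀ g ∈ G, g ∉ P
  · exact ⟨P, ⟨hP.isPrimary, hP.radical⟩, hQP.le, hGP⟩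
  push_neg at hGP
  obtain ⟨g₀, hg₀G, hg₀P⟩ := hGP
  set G' := G.filter (· ∈ P) with hG'def
  have hg₀' : g₀ ∈ G' := Finset.mem_filter.mpr ⟨hg₀G, hg₀P⟩
  set w := ∏ g ∈ G', g with hwdef
  have hwP : w ∈ P := by
    rw [hwdef, ← Finset.mul_prod_erase G' _ hg₀']
    exact Ideal.mul_mem_right _ _ hg₀P
  have hwQ : w ∉ Q := by
    refine Finset.prod_induction _ (· ∉ Q)
      (fun a b ha hb hab => ((hQ.mem_or_mem hab).elim ha hb))
      ((Ideal.ne_top_iff_one Q).mp hQ.ne_top) ?_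
    intro x hx
    exact hG x (Finset.mem_filter.mp hx).1
  have hw2P : w ^ 2 ∈ P := by rw [sq]; exact Ideal.mul_mem_left _ _ hwP
  have hw2Q : w ^ 2 ∉ Q := by
    intro h
    rw [sq] at h
    exact (hQ.mem_or_mem h).elim hwQ hwQ
  set I0 := Ideal.span ({w ^ 2} : Set V) with hI0def
  have hrad0 : I0.radical = P := span_rad_eq hP hQ hQP himm hw2P hw2Q
  set J := sat P hP I0 with hJdef
  have hI0P : I0 ≤ P := Ideal.span_le.mpr (Set.singleton_subset_iff.mpr hw2P)
  have hradJ : J.radical = P := by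
    refine le_antisymm ?_ ?_
    · rintro x ⟨n, hn⟩
      obtain ⟨s, hs, hsx⟩ := hn
      rcases hP.mem_or_mem (hI0P hsx) with h | h
      · exact absurd h hs
      · exact hP.mem_of_pow_mem n h
    · rw [← hrad0]
      exact Ideal.radical_mono (le_sat hP I0)
  have hJpr : J.IsPrimary := primary_of_sat hP hradJ (sat_sat hP I0)
  refine ⟨J, ⟨hJpr, hradJ⟩, Q_le_primary hQ hQP hradJ, ?_⟩
  intro g hgG hgJ
  by_cases hgP : g ∈ P
  · have hgG' : g ∈ G' := Finset.mem_filter.mpr ⟨hgG, hgP⟩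
    obtain ⟨s, hs, hsg⟩ := hgJ
    rw [hI0def, Ideal.mem_span_singleton] at hsg
    obtain ⟨c, hc⟩ := hsg
    set h := ∏ x ∈ G'.erase g, x with hhdef
    have hwgh : w = g * h := (Finset.mul_prod_erase G' _ hgG').symm
    have hg0 : g ≠ 0 := fun h0 => (hG g hgG) (h0 ▸ Q.zero_mem)
    have hs' : s = g * (h ^ 2 * c) := by
      apply mul_left_cancel₀ hg0
      calc g * s = s * g := mul_comm _ _
        _ = w ^ 2 * c := hc
        _ = g * (g * (h ^ 2 * c)) := by rw [hwgh]; ring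
    exact hs (hs' ▸ Ideal.mul_mem_right _ _ hgP)
  · exact hgP (hradJ ▸ Ideal.le_radical hgJ)

lemma patch_nbhd {Q : Ideal V} {U : Set (Ideal V)}
    (hU : TopologicalSpace.GenerateOpen (pGen V) U) :
    Q ∈ U → ∃ G : Finset V, (∀ g ∈ G, g ∉ Q) ∧
      ∀ J : Ideal V, Q ≤ J → (∀ g ∈ G, g ∉ J) → J ∈ U := by
  classical
  induction hU with
  | basic s hs =>
    intro hQs
    rcases hs with ⟨hc, ho⟩ | ⟨hc, ho⟩
    · exact ⟨∅, by simp, fun J hQJ _ => zar_upclosed_s15 ho hQJ hQs⟩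
    · obtain ⟨G, hG, hW⟩ := compact_open_structure hc ho (fun hh => hh hQs)
      exact ⟨G, hG, fun J _ hJ => not_not.mp (hW J hJ)⟩
  | univ => exact fun _ => ⟨∅, by simp, fun _ _ _ => trivial⟩
  | inter s t _ _ ihs iht =>
    intro hQ
    obtain ⟨G1, h1, hs1⟩ := ihs hQ.1
    obtain ⟨G2, h2, hs2⟩ := iht hQ.2
    refine ⟨G1 ∪ G2, fun g hg => (Finset.mem_union.mp hg).elim (h1 g) (h2 g), ?_⟩
    intro J hQJ hJ
    exact ⟨hs1 J hQJ fun g hg => hJ g (Finset.mem_union_left _ hg),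
      hs2 J hQJ fun g hg => hJ g (Finset.mem_union_right _ hg)⟩
  | sUnion S _ ih =>
    intro hQ
    obtain ⟨s, hsS, hQs⟩ := hQ
    obtain ⟨G, h1, h2⟩ := ih s hsS hQs
    exact ⟨G, h1, fun J hQJ hJ => ⟨s, hsS, h2 J hQJ hJ⟩⟩

end Aux

theorem stmt15 (V : Type*) [CommRing V] [IsDomain V] [ValuationRing V]
    (P : Ideal V) (hP : P.IsPrime)
    (hbr : ∃ Q₀ : Ideal V, Q₀.IsPrimary ∧ Q₀.radical = P ∧ Q₀ ≠ P)
    (Q : Ideal V) (hQ : Q.IsPrime) (hQP : Q < P)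
    (himm : ∀ P' : Ideal V, P'.IsPrime → Q < P' → P ≤ P') :
    @closure (Ideal V) (patchOf (zarIdealTop V))
        {I : Ideal V | I.IsPrimary ∧ I.radical = P} =
      {I : Ideal V | I.IsPrimary ∧ I.radical = P} ∪ {Q} := by
  
  classical
  set S : Set (Ideal V) := {I : Ideal V | I.IsPrimary ∧ I.radical = P} with hSdef
  apply Set.Subset.antisymm
  · intro I hI
    by_contra hmem
    have hIS : I ∉ S := fun h => hmem (Or.inl h)
    have hIQ : I ≠ Q := fun h => hmem (Or.inr h)
    have key : ∃ U : Set (Ideal V), TopologicalSpace.GenerateOpen (pGen V) U ∧ I ∈ U ∧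
        ∀ J ∈ S, J ∉ U := by
      by_cases h1 : I ≤ P
      · by_cases h2 : Q ≤ I
        · -- Q < I ≤ P
          have hQI : Q < I := lt_of_le_of_ne h2 (Ne.symm hIQ)
          obtain ⟨x, hxI, hxQ⟩ := SetLike.exists_of_lt hQI
          have hradI : I.radical = P := by
            refine le_antisymm ?_ ?_
            · rw [← hP.radical]; exact Ideal.radical_mono h1
            · rw [← span_rad_eq hP hQ hQP himm (h1 hxI) hxQ]
              exact Ideal.radical_mono (Ideal.span_le.mpr (Set.singleton_subset_iff.mpr hxI))
          have hnotpr : ¬ I.IsPrimary := fun h => hIS ⟨h, hradI⟩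
          have hnot_sat : ¬ (sat P hP I ≤ I) := fun h => hnotpr (primary_of_sat hP hradI h)
          obtain ⟨a, haS, haI⟩ := SetLike.not_le_iff_exists.mp hnot_sat
          have hgex : ∃ g ∈ I, ∀ J : Ideal V, J ∈ S → J ≤ I → g ∉ J := by
            by_contra hc
            push_neg at hc
            apply hnot_sat
            rintro y ⟨s, hs, hsy⟩
            obtain ⟨J, hJS, hJI, hsyJ⟩ := hc _ hsy
            exact hJI (sat_le_of_primary hP hJS.1 hJS.2 ⟨s, hs, hsyJ⟩)
          obtain ⟨g, hgI, hgJ⟩ := hgex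
          refine ⟨{J : Ideal V | ({g} : Set V) ⊆ (J : Set V)} ∩
              {J : Ideal V | ({a} : Set V) ⊆ (J : Set V)}ᶜ,
            TopologicalSpace.GenerateOpen.inter _ _
              (TopologicalSpace.GenerateOpen.basic _
                (Or.inl ⟨BB_compact _, BB_open _ (Set.finite_singleton g)⟩))
              (TopologicalSpace.GenerateOpen.basic _
                (Or.inr (by rw [compl_compl]
                            exact ⟨BB_compact _, BB_open _ (Set.finite_singleton a)⟩))),
            ⟨Set.singleton_subset_iff.mpr hgI, fun h => haI (Set.singleton_subset_iff.mp h)⟩, ?_⟩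
          rintro J hJS ⟨hJg, hJa⟩
          rcases ideal_le_total J I with h | h
          · exact hgJ J hJS h (Set.singleton_subset_iff.mp hJg)
          · refine hJa (Set.singleton_subset_iff.mpr ?_)
            exact sat_le_of_primary hP hJS.1 hJS.2 (sat_mono hP h haS)
        · -- Q not ≤ I : pick a ∈ Q \ I
          obtain ⟨a, haQ, haI⟩ := SetLike.not_le_iff_exists.mp h2
          refine ⟨{J : Ideal V | ({a} : Set V) ⊆ (J : Set V)}ᶜ,
            TopologicalSpace.GenerateOpen.basic _
              (Or.inr (by rw [compl_compl]
                          exact ⟨BB_compact _, BB_open _ (Set.finite_singleton a)⟩)),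
            fun h => haI (Set.singleton_subset_iff.mp h), ?_⟩
          intro J hJS hJ
          exact hJ (Set.singleton_subset_iff.mpr (Q_le_primary hQ hQP hJS.2 haQ))
      · -- I not ≤ P : pick g ∈ I \ P
        obtain ⟨g, hgI, hgP⟩ := SetLike.not_le_iff_exists.mp h1
        refine ⟨{J : Ideal V | ({g} : Set V) ⊆ (J : Set V)},
          TopologicalSpace.GenerateOpen.basic _
            (Or.inl ⟨BB_compact _, BB_open _ (Set.finite_singleton g)⟩),
          Set.singleton_subset_iff.mpr hgI, ?_⟩
        intro J hJS hJ
        have : g ∈ P := hJS.2 ▸ Ideal.le_radical (Set.singleton_subset_iff.mp hJ)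
        exact hgP this
    obtain ⟨U, hUo, hIU, hUS⟩ := key
    letI : TopologicalSpace (Ideal V) := patchOf (zarIdealTop V)
    obtain ⟨J, hJU, hJS⟩ := mem_closure_iff.mp hI U hUo hIU
    exact hUS J hJS hJU
  · apply Set.union_subset
    · letI : TopologicalSpace (Ideal V) := patchOf (zarIdealTop V)
      exact subset_closure
    · letI : TopologicalSpace (Ideal V) := patchOf (zarIdealTop V)
      rw [Set.singleton_subset_iff, mem_closure_iff]
      intro o ho hQo
      obtain ⟨G, hG, hKey⟩ := patch_nbhd ho hQo
      obtain ⟨J, hJS, hQJ, hJG⟩ := exists_primary hP hQ hQP himm G hG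
      exact ⟨J, hKey J hQJ hJG, hJS⟩
end
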